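/- arXiv:1408.6858 — 4 statements merged into one kernel-verified Lean document; each statement's English description precedes it below -/
import Mathlib

section
/- Let n, m, k be positive integers with 1 ≤ k ≤ n−1 and suppose that m divides the binomial coefficient C(n,k). Then for every subset S of [n−1], the congruence β_n(S) ≡ −β_n(S △ {k}) (mod m) holds. -/
/-- The descent set of a permutation of `Fin n`, as a subset of `[n-1] = {1,…,n-1}`
(1-based positions): `i` is a descent if `π(i) > π(i+1)`. -/
def descentSet (n : ℕ) (π : Equiv.Perm (Fin n)) : Finset ℕ :=
  (Finset.Ico 1 n).filter fun i => ∀ h : i < n, π ⟨i, h⟩ < π ⟨i - 1, by omega⟩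

/-- The descent set statistic `β_n(S)`: the number of permutations of `{1,…,n}`
with descent set `S`. -/
def beta (n : ℕ) (S : Finset ℕ) : ℕ :=
  (Finset.univ.filter fun π : Equiv.Perm (Fin n) => descentSet n π = S).card

/-- The descent set polynomial `Q_n(t) = ∑_{S ⊆ [n-1]} t^{β_n(S)}`. -/
noncomputable def Q (n : ℕ) : Polynomial ℤ :=
  ∑ S ∈ (Finset.Ico 1 n).powerset, Polynomial.X ^ beta n S

namespace MacMahonAux

variable {n k : ℕ}

/-- The standard `k`-subset of `Fin n`. -/
def A0 (n k : ℕ) : Finset (Fin n) := Finset.univ.filter fun x => (x : ℕ) < k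

lemma card_A0 (hk : k ≤ n) : (A0 n k).card = k := by
  classical
  have h : A0 n k = Finset.image (Fin.castLE hk) Finset.univ := by
    ext x
    simp only [A0, Finset.mem_filter, Finset.mem_univ, true_and, Finset.mem_image]
    constructor
    · intro h; exact ⟨⟨(x : ℕ), h⟩, by simp [Fin.ext_iff]⟩
    · rintro ⟨j, -, rfl⟩; exact j.isLt
  rw [h, Finset.card_image_of_injective _ (Fin.castLE_injective hk), Finset.card_univ,
    Fintype.card_fin]

lemma card_compl_eq (hk : k ≤ n) (A : Finset (Fin n)) (hA : A.card = k) :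
    Aᶜ.card = n - k := by
  rw [Finset.card_compl, hA, Fintype.card_fin]

/-- The canonical permutation sending `{0,…,k-1}` order-isomorphically onto `A`
and the rest order-isomorphically onto `Aᶜ`. -/
def eA (hk : k ≤ n) (A : Finset (Fin n)) (hA : A.card = k) : Fin n → Fin n :=
  fun i =>
    if h : (i : ℕ) < k then ((A.orderIsoOfFin hA) ⟨(i : ℕ), h⟩ : Fin n)
    else ((Aᶜ.orderIsoOfFin (card_compl_eq hk A hA))
        ⟨(i : ℕ) - k, by have := i.isLt; omega⟩ : Fin n)

lemma eA_mem_iff (hk : k ≤ n) (A : Finset (Fin n)) (hA : A.card = k) (i : Fin n) :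
    eA hk A hA i ∈ A ↔ (i : ℕ) < k := by
  by_cases h : (i : ℕ) < k
  · simp only [eA, dif_pos h, h, iff_true]
    exact ((A.orderIsoOfFin hA) ⟨(i : ℕ), h⟩).2
  · simp only [eA, dif_neg h, h, iff_false]
    have h2 := ((Aᶜ.orderIsoOfFin (card_compl_eq hk A hA))
        ⟨(i : ℕ) - k, by have := i.isLt; omega⟩).2
    exact Finset.mem_compl.mp h2

lemma eA_lt_iff (hk : k ≤ n) (A : Finset (Fin n)) (hA : A.card = k) {a b : Fin n}
    (hab : ((a : ℕ) < k ↔ (b : ℕ) < k)) :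
    eA hk A hA a < eA hk A hA b ↔ a < b := by
  by_cases h : (a : ℕ) < k
  · have hb : (b : ℕ) < k := hab.mp h
    simp only [eA, dif_pos h, dif_pos hb]
    rw [Subtype.coe_lt_coe, OrderIso.lt_iff_lt, Fin.mk_lt_mk, Fin.lt_def]
  · have hb : ¬ (b : ℕ) < k := fun hh => h (hab.mpr hh)
    simp only [eA, dif_neg h, dif_neg hb]
    rw [Subtype.coe_lt_coe, OrderIso.lt_iff_lt, Fin.mk_lt_mk, Fin.lt_def]
    omega

lemma eA_injective (hk : k ≤ n) (A : Finset (Fin n)) (hA : A.card = k) :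
    Function.Injective (eA hk A hA) := by
  intro a b hab
  have hiff : (a : ℕ) < k ↔ (b : ℕ) < k := by
    rw [← eA_mem_iff hk A hA a, ← eA_mem_iff hk A hA b, hab]
  rcases lt_trichotomy a b with hlt | heq | hgt
  · exact absurd ((eA_lt_iff hk A hA hiff).mpr hlt) (by rw [hab]; exact lt_irrefl _)
  · exact heq
  · exact absurd ((eA_lt_iff hk A hA hiff.symm).mpr hgt) (by rw [hab]; exact lt_irrefl _)

/-- `eA` as a permutation. -/
noncomputable def eqA (hk : k ≤ n) (A : Finset (Fin n)) (hA : A.card = k) : Equiv.Perm (Fin n) :=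
  Equiv.ofBijective _ ((Finite.injective_iff_bijective).mp (eA_injective hk A hA))

@[simp] lemma eqA_apply (hk : k ≤ n) (A : Finset (Fin n)) (hA : A.card = k) (i : Fin n) :
    eqA hk A hA i = eA hk A hA i := rfl

lemma eqA_symm_lt_iff (hk : k ≤ n) (A : Finset (Fin n)) (hA : A.card = k) (b : Fin n) :
    (((eqA hk A hA).symm b : Fin n) : ℕ) < k ↔ b ∈ A := by
  have h := eA_mem_iff hk A hA ((eqA hk A hA).symm b)
  rw [← eqA_apply hk A hA, Equiv.apply_symm_apply] at h
  exact h.symm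

lemma descent_trans (hk1 : 1 ≤ k) (hkn : k < n) (A : Finset (Fin n)) (hA : A.card = k)
    (σ : Equiv.Perm (Fin n)) (hσ : ∀ j : Fin n, ((σ j : ℕ) < k ↔ (j : ℕ) < k)) :
    descentSet n (σ.trans (eqA hkn.le A hA)) \ {k} = descentSet n σ \ {k} := by
  ext i
  simp only [Finset.mem_sdiff, Finset.mem_singleton, descentSet, Finset.mem_filter,
    Finset.mem_Ico, Equiv.trans_apply, eqA_apply]
  by_cases h3 : i = k
  · simp [h3]
  · simp only [h3, not_false_iff, and_true]
    refine Finset.mem_filter.trans ?_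
    rw [Finset.mem_Ico]
    have key : ∀ h : i < n, 1 ≤ i →
        (eA hkn.le A hA (σ ⟨i, h⟩) < eA hkn.le A hA (σ ⟨i - 1, by omega⟩) ↔
          σ ⟨i, h⟩ < σ ⟨i - 1, by omega⟩) := by
      intro h h1
      apply eA_lt_iff
      rw [hσ, hσ]
      simp only [Fin.val_mk]
      omega
    constructor
    · rintro ⟨⟨h1, h2⟩, hd⟩
      exact ⟨⟨h1, h2⟩, fun h => (key h h1).mp (hd h)⟩
    · rintro ⟨⟨h1, h2⟩, hd⟩
      exact ⟨⟨h1, h2⟩, fun h => (key h h1).mpr (hd h)⟩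

lemma image_eq_iff (hk : k ≤ n) (A : Finset (Fin n)) (hA : A.card = k)
    (π : Equiv.Perm (Fin n)) :
    (A0 n k).image π = A ↔ ∀ j : Fin n, (π j ∈ A ↔ (j : ℕ) < k) := by
  constructor
  · intro h j
    rw [← h, Finset.mem_image]
    constructor
    · rintro ⟨x, hx, hxj⟩
      have hx' : x = j := π.injective hxj
      subst hx'
      simpa [A0] using hx
    · intro hj
      exact ⟨j, by simp [A0, hj], rfl⟩
  · intro h
    ext x
    rw [Finset.mem_image]
    constructor
    · rintro ⟨j, hj, rfl⟩
      exact (h j).mpr (by simpa [A0] using hj)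
    · intro hx
      refine ⟨π.symm x, ?_, by simp⟩
      simp only [A0, Finset.mem_filter, Finset.mem_univ, true_and]
      rw [← h (π.symm x)]
      simpa using hx

end MacMahonAux

open MacMahonAux in
/-- MacMahon flip lemma: if `m ∣ C(n,k)` with `1 ≤ k ≤ n-1`, then
`β_n(S) ≡ -β_n(S ∆ {k}) (mod m)` for every `S ⊆ [n-1]`. -/
theorem beta_symmDiff_modEq (n m k : ℕ) (hm : 0 < m) (hk1 : 1 ≤ k) (hk2 : k ≤ n - 1)
    (hdvd : m ∣ n.choose k) (S : Finset ℕ) (hS : S ⊆ Finset.Ico 1 n) :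
    (beta n S : ℤ) ≡ -(beta n (symmDiff S {k}) : ℤ) [ZMOD (m : ℤ)] := by
  classical
  have hkn : k < n := by omega
  have hk : k ≤ n := hkn.le
  set T := symmDiff S {k} with hT
  have hkT : k ∈ T ↔ k ∉ S := by
    simp [hT, Finset.mem_symmDiff]
  -- the set of permutations whose descent set agrees with S off position k
  set X := Finset.univ.filter
    (fun π : Equiv.Perm (Fin n) => descentSet n π \ {k} = S \ {k}) with hX
  have hsplit : ∀ D : Finset ℕ, (D \ {k} = S \ {k}) ↔ (D = S ∨ D = T) := by
    intro D
    constructor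
    · intro h
      by_cases hkD : k ∈ D <;> by_cases hkS : k ∈ S
      · left; ext a
        by_cases ha : a = k
        · simp [ha, hkD, hkS]
        · have := Finset.ext_iff.mp h a
          simpa [Finset.mem_sdiff, ha] using this
      · right; ext a
        by_cases ha : a = k
        · simp [ha, hkD, hkT.mpr hkS]
        · have := Finset.ext_iff.mp h a
          simp only [Finset.mem_sdiff, Finset.mem_singleton, ha, not_false_iff, and_true] at this
          simp [this, hT, Finset.mem_symmDiff, ha]
      · right; ext a
        by_cases ha : a = k
        · simp only [ha]
          constructor
          · intro h'; exact absurd h' hkD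
          · intro h'; exact absurd ((hkT.mp h')) (not_not.mpr hkS)
        · have := Finset.ext_iff.mp h a
          simp only [Finset.mem_sdiff, Finset.mem_singleton, ha, not_false_iff, and_true] at this
          simp [this, hT, Finset.mem_symmDiff, ha]
      · left; ext a
        by_cases ha : a = k
        · simp [ha, hkD, hkS]
        · have := Finset.ext_iff.mp h a
          simpa [Finset.mem_sdiff, ha] using this
    · rintro (rfl | rfl)
      · rfl
      · ext a
        by_cases ha : a = k
        · simp [ha]
        · simp [hT, Finset.mem_symmDiff, ha]
  have hST : S ≠ T := by
    intro hEq
    have := Finset.ext_iff.mp hEq k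
    rw [hkT] at this
    tauto
  have hXcard : X.card = beta n S + beta n T := by
    have hXeq : X = (Finset.univ.filter fun π : Equiv.Perm (Fin n) => descentSet n π = S) ∪
        (Finset.univ.filter fun π : Equiv.Perm (Fin n) => descentSet n π = T) := by
      rw [← Finset.filter_or]
      apply Finset.filter_congr
      intro π _
      exact hsplit (descentSet n π)
    rw [hXeq, Finset.card_union_of_disjoint]
    · rfl
    · rw [Finset.disjoint_left]
      intro π h1 h2
      rw [Finset.mem_filter] at h1 h2
      exact hST (h1.2 ▸ h2.2)
  -- the fiber over the standard subset
  set Y := Finset.univ.filter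
    (fun σ : Equiv.Perm (Fin n) => descentSet n σ \ {k} = S \ {k} ∧
      ∀ j : Fin n, ((σ j : ℕ) < k ↔ (j : ℕ) < k)) with hY
  have hfiber : ∀ A ∈ Finset.powersetCard k (Finset.univ : Finset (Fin n)),
      (X.filter (fun π : Equiv.Perm (Fin n) => (A0 n k).image ⇑π = A)).card = Y.card := by
    intro A hA'
    have hA : A.card = k := (Finset.mem_powersetCard.mp hA').2
    refine Finset.card_bij' (fun (π : Equiv.Perm (Fin n)) (_ : π ∈ X.filter (fun π : Equiv.Perm (Fin n) => (A0 n k).image ⇑π = A)) => π.trans (eqA hk A hA).symm)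
      (fun (σ : Equiv.Perm (Fin n)) (_ : σ ∈ Y) => σ.trans (eqA hk A hA)) ?_ ?_ ?_ ?_
    · -- membership forward
      intro π hπ
      rw [Finset.mem_filter] at hπ
      obtain ⟨hπX, himg⟩ := hπ
      rw [hX, Finset.mem_filter] at hπX
      have hmem : ∀ j : Fin n, (π j ∈ A ↔ (j : ℕ) < k) := (image_eq_iff hk A hA π).mp himg
      set σ := π.trans (eqA hk A hA).symm with hσdef
      have hσ : ∀ j : Fin n, ((σ j : ℕ) < k ↔ (j : ℕ) < k) := by
        intro j
        rw [hσdef]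
        simp only [Equiv.trans_apply]
        rw [eqA_symm_lt_iff hk A hA (π j)]
        exact hmem j
      have hback : σ.trans (eqA hk A hA) = π := by
        ext x
        simp [hσdef]
      rw [hY, Finset.mem_filter]
      refine ⟨Finset.mem_univ _, ?_, hσ⟩
      have := descent_trans hk1 hkn A hA σ hσ
      rw [hback] at this
      rw [← this]
      exact hπX.2
    · -- membership backward
      intro σ hσ'
      rw [hY, Finset.mem_filter] at hσ'
      obtain ⟨-, hdes, hσ⟩ := hσ'
      rw [Finset.mem_filter]
      refine ⟨?_, ?_⟩
      · rw [hX, Finset.mem_filter]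
        refine ⟨Finset.mem_univ _, ?_⟩
        rw [descent_trans hk1 hkn A hA σ hσ]
        exact hdes
      · rw [image_eq_iff hk A hA]
        intro j
        simp only [Equiv.trans_apply, eqA_apply]
        rw [eA_mem_iff hk A hA (σ j)]
        exact hσ j
    · intro π hπ
      ext x
      simp
    · intro σ hσ'
      ext x
      exact congrArg Fin.val (Equiv.symm_apply_apply (eqA hk A hA) (σ x))
  have hXcount : X.card = n.choose k * Y.card := by
    rw [Finset.card_eq_sum_card_fiberwise
        (f := fun π : Equiv.Perm (Fin n) => (A0 n k).image ⇑π)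
        (t := Finset.powersetCard k (Finset.univ : Finset (Fin n)))
        (fun π _ => by
          rw [Finset.mem_coe, Finset.mem_powersetCard]
          exact ⟨Finset.subset_univ _,
            by rw [Finset.card_image_of_injective _ π.injective, card_A0 hk]⟩)]
    rw [Finset.sum_congr rfl hfiber, Finset.sum_const, smul_eq_mul,
      Finset.card_powersetCard, Finset.card_univ, Fintype.card_fin]
  have hdvdN : m ∣ beta n S + beta n T := by
    rw [← hXcard, hXcount]
    exact hdvd.mul_right _
  rw [Int.modEq_iff_dvd]
  have : -(beta n T : ℤ) - (beta n S : ℤ) = -((beta n S : ℤ) + (beta n T : ℤ)) := by ring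
  rw [this]
  exact dvd_neg.mpr (by exact_mod_cast Int.natCast_dvd_natCast.mpr hdvdN)
end

section
/- For every subset S of [n−1], the descent set statistic β_n(S) is congruent modulo 2 to the number of subsets T = {s_1 < s_2 < ⋯ < s_k} of S whose associated composition co(T) = (s_1, s_2−s_1, …, s_k−s_{k−1}, n−s_k) of n sums to n without any carries in base 2 (equivalently, the multinomial coefficient n!/(c_1!·c_2!⋯c_{k+1}!) is odd). In other words, β_n(S) ≡ χ̃(Δ_n|_S) (mod 2), the reduced Euler characteristic of the induced subcomplex of Δ_n on S. -/
/-- The flag `f`-vector entry of the Boolean algebra `B_n` indexed by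
`T = {s₁ < s₂ < ⋯ < s_k} ⊆ [n-1]`: the multinomial coefficient
`n!/(c₁!·c₂!⋯c_{k+1}!)` of the associated composition
`co(T) = (s₁, s₂ - s₁, …, n - s_k)`, computed as the telescoping product
`C(s₂,s₁)·C(s₃,s₂)⋯C(n,s_k)`. -/
def flagF (n : ℕ) (T : Finset ℕ) : ℕ :=
  (((T.sort (· ≤ ·) ++ [n]).zip (0 :: T.sort (· ≤ ·))).map
    fun p => p.1.choose p.2).prod

open Finset

section FlagFRec

lemma sort_eq_append {S : Finset ℕ} (hne : S.Nonempty) :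
    S.sort (· ≤ ·) = (S.erase (S.max' hne)).sort (· ≤ ·) ++ [S.max' hne] := by
  set s := S.max' hne with hs
  refine (fun hp h2 => List.Perm.eq_of_pairwise' (r := (· ≤ ·)) (S.pairwise_sort _) h2 hp) ?_ ?_
  · rw [← Multiset.coe_eq_coe]
    show (S.sort (· ≤ ·) : Multiset ℕ) = ((S.erase s).sort (· ≤ ·) ++ [s] : List ℕ)
    rw [← Multiset.coe_add, Finset.sort_eq, Finset.sort_eq, Finset.erase_val]
    have : ([s] : Multiset ℕ) = {s} := rfl
    rw [this, add_comm, Multiset.singleton_add, Multiset.cons_erase (by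
      exact Finset.mem_def.mp (S.max'_mem hne))]
  · rw [List.pairwise_append]
    refine ⟨(S.erase s).pairwise_sort _, List.pairwise_singleton _ s, ?_⟩
    intro a ha b hb
    rw [List.mem_singleton] at hb
    subst hb
    have haS : a ∈ S := Finset.mem_of_mem_erase ((Finset.mem_sort _).mp ha)
    exact S.le_max' a haS

lemma flagF_rec {n : ℕ} {S : Finset ℕ} (hne : S.Nonempty) :
    flagF n S = flagF (S.max' hne) (S.erase (S.max' hne)) * n.choose (S.max' hne) := by
  set s := S.max' hne with hs
  set l := (S.erase s).sort (· ≤ ·) with hl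
  rw [flagF, sort_eq_append hne, ← hs, ← hl]
  have h2 : (0 :: (l ++ [s])) = (0 :: l) ++ [s] := rfl
  have h3 : (l ++ [s]) ++ [n] = (l ++ [s]) ++ [n] := rfl
  rw [List.append_assoc l [s] [n]]
  have h4 : [s] ++ [n] = [s, n] := rfl
  rw [h4, h2]
  have h5 : l ++ [s, n] = (l ++ [s]) ++ [n] := by simp
  rw [h5, List.zip_append (by simp), List.map_append, List.prod_append]
  rw [flagF, ← hl]
  simp

end FlagFRec

section Aux

lemma descentSet_one (n : ℕ) : descentSet n (1 : Equiv.Perm (Fin n)) = ∅ := by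
  rw [descentSet, Finset.filter_eq_empty_iff]
  intro i hi hall
  rw [Finset.mem_Ico] at hi
  have h := hall hi.2
  simp only [Equiv.Perm.coe_one, id_eq, Fin.lt_def] at h
  omega

lemma eq_one_of_descentSet_empty {n : ℕ} (π : Equiv.Perm (Fin n))
    (h : descentSet n π = ∅) : π = 1 := by
  have hmono : StrictMono ⇑π := by
    cases n with
    | zero => intro a; exact absurd a.2 (by omega)
    | succ k =>
      rw [Fin.strictMono_iff_lt_succ]
      intro i
      have hi : (i.val + 1) ∉ descentSet (k + 1) π := by
        rw [h]; exact Finset.notMem_empty _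
      rw [descentSet, Finset.mem_filter, Finset.mem_Ico] at hi
      push_neg at hi
      obtain ⟨hlt, hn⟩ := hi ⟨by omega, by omega⟩
      have h1 : (⟨i.val + 1 - 1, by omega⟩ : Fin (k + 1)) = i.castSucc := by
        ext; simp
      have h2 : (⟨i.val + 1, hlt⟩ : Fin (k + 1)) = i.succ := by
        ext; simp
      rw [h1, h2] at hn
      rcases lt_or_eq_of_le hn with h3 | h3
      · exact h3
      · exact absurd (π.injective h3) (Fin.ne_of_lt (Fin.castSucc_lt_succ (i := i)))
  have hu : (Finset.univ : Finset (Fin n)).card = n := by simp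
  have h1 : ⇑π = ⇑((Finset.univ : Finset (Fin n)).orderEmbOfFin hu) :=
    Finset.orderEmbOfFin_unique hu (fun x => Finset.mem_univ _) hmono
  have h2 : (id : Fin n → Fin n) = ⇑((Finset.univ : Finset (Fin n)).orderEmbOfFin hu) :=
    Finset.orderEmbOfFin_unique hu (fun x => Finset.mem_univ _) strictMono_id
  ext i
  have h3 := congrFun h1 i
  rw [← congrFun h2 i] at h3
  have h4 : π i = i := by simpa using h3
  exact congrArg Fin.val h4

lemma compl_card {n s : ℕ} {A : Finset (Fin n)} (hA : A.card = s) : Aᶜ.card = n - s := by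
  rw [Finset.card_compl, hA, Fintype.card_fin]

/-- The permutation of `Fin n` built from a set `A` of size `s` and a pattern `σ`:
positions `< s` carry the elements of `A` arranged according to `σ`, positions `≥ s`
carry the elements of `Aᶜ` in increasing order. -/
noncomputable def buildPerm {n s : ℕ} (hsn : s ≤ n) (A : Finset (Fin n)) (hA : A.card = s)
    (σ : Equiv.Perm (Fin s)) : Equiv.Perm (Fin n) :=
  Equiv.ofBijective
    (fun i => if h : (i : ℕ) < s then A.orderEmbOfFin hA (σ ⟨i, h⟩)
      else Aᶜ.orderEmbOfFin (compl_card hA) ⟨(i : ℕ) - s, by omega⟩)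
    (by
      refine Finite.injective_iff_bijective.mp ?_
      intro a b hab
      dsimp only at hab
      by_cases ha : (a : ℕ) < s <;> by_cases hb : (b : ℕ) < s
      · rw [dif_pos ha, dif_pos hb] at hab
        have h9 := σ.injective ((A.orderEmbOfFin hA).injective hab)
        rw [Fin.mk_eq_mk] at h9
        exact Fin.ext h9
      · exfalso
        rw [dif_pos ha, dif_neg hb] at hab
        have h1 : (A.orderEmbOfFin hA) (σ ⟨a, ha⟩) ∈ A := Finset.orderEmbOfFin_mem _ _ _
        have h2 : (Aᶜ.orderEmbOfFin (compl_card hA)) ⟨(b : ℕ) - s, by omega⟩ ∈ Aᶜ :=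
          Finset.orderEmbOfFin_mem _ _ _
        rw [← hab] at h2
        exact (Finset.mem_compl.mp h2) h1
      · exfalso
        rw [dif_neg ha, dif_pos hb] at hab
        have h1 : (A.orderEmbOfFin hA) (σ ⟨b, hb⟩) ∈ A := Finset.orderEmbOfFin_mem _ _ _
        have h2 : (Aᶜ.orderEmbOfFin (compl_card hA)) ⟨(a : ℕ) - s, by omega⟩ ∈ Aᶜ :=
          Finset.orderEmbOfFin_mem _ _ _
        rw [hab] at h2
        exact (Finset.mem_compl.mp h2) h1
      · rw [dif_neg ha, dif_neg hb] at hab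
        have h1 := (Aᶜ.orderEmbOfFin (compl_card hA)).injective hab
        rw [Fin.mk_eq_mk] at h1
        exact Fin.ext (by omega))

lemma buildPerm_apply_lt {n s : ℕ} (hsn : s ≤ n) (A : Finset (Fin n)) (hA : A.card = s)
    (σ : Equiv.Perm (Fin s)) (i : ℕ) (hin : i < n) (h : i < s) :
    buildPerm hsn A hA σ ⟨i, hin⟩ = A.orderEmbOfFin hA (σ ⟨i, h⟩) :=
  dif_pos h

lemma buildPerm_apply_ge {n s : ℕ} (hsn : s ≤ n) (A : Finset (Fin n)) (hA : A.card = s)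
    (σ : Equiv.Perm (Fin s)) (i : ℕ) (hin : i < n) (h : ¬ i < s) :
    buildPerm hsn A hA σ ⟨i, hin⟩ = Aᶜ.orderEmbOfFin (compl_card hA) ⟨i - s, by omega⟩ :=
  dif_neg h

end Aux

section Main

lemma descentSet_buildPerm_subset {n s : ℕ} (hsn : s < n) {S : Finset ℕ}
    (hsS : s ∈ S) (A : Finset (Fin n)) (hA : A.card = s) (σ : Equiv.Perm (Fin s))
    (hσ : descentSet s σ ⊆ S.erase s) :
    descentSet n (buildPerm hsn.le A hA σ) ⊆ S := by
  intro i hi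
  rw [descentSet, Finset.mem_filter, Finset.mem_Ico] at hi
  obtain ⟨⟨hi1, hin⟩, hd⟩ := hi
  have hd := hd hin
  rcases lt_trichotomy i s with hlt | rfl | hgt
  · have hi1s : i - 1 < s := by omega
    rw [buildPerm_apply_lt hsn.le A hA σ i hin hlt,
      buildPerm_apply_lt hsn.le A hA σ (i - 1) (by omega) hi1s] at hd
    have h2 : σ ⟨i, hlt⟩ < σ ⟨i - 1, hi1s⟩ := (OrderEmbedding.lt_iff_lt _).mp hd
    have h3 : i ∈ descentSet s σ := by
      rw [descentSet, Finset.mem_filter, Finset.mem_Ico]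
      exact ⟨⟨hi1, hlt⟩, fun h => h2⟩
    exact Finset.mem_of_mem_erase (hσ h3)
  · exact hsS
  · exfalso
    rw [buildPerm_apply_ge hsn.le A hA σ i hin (by omega),
      buildPerm_apply_ge hsn.le A hA σ (i - 1) (by omega) (by omega)] at hd
    have h2 := (OrderEmbedding.lt_iff_lt _).mp hd
    rw [Fin.mk_lt_mk] at h2
    omega

lemma buildPerm_injective {n s : ℕ} (hsn : s ≤ n) {A A' : Finset (Fin n)}
    (hA : A.card = s) (hA' : A'.card = s) {σ σ' : Equiv.Perm (Fin s)}
    (h : buildPerm hsn A hA σ = buildPerm hsn A' hA' σ') : A = A' ∧ σ = σ' := by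
  have himg : ∀ (B : Finset (Fin n)) (hB : B.card = s) (τ : Equiv.Perm (Fin s)),
      B = Finset.image (fun i : Fin s => buildPerm hsn B hB τ ⟨(i : ℕ), by omega⟩)
        Finset.univ := by
    intro B hB τ
    symm
    apply Finset.eq_of_subset_of_card_le
    · intro x hx
      obtain ⟨i, -, rfl⟩ := Finset.mem_image.mp hx
      rw [buildPerm_apply_lt hsn B hB τ (i : ℕ) (by omega) i.2]
      exact Finset.orderEmbOfFin_mem _ _ _
    · have hinj : Function.Injective
          (fun i : Fin s => buildPerm hsn B hB τ ⟨(i : ℕ), by omega⟩) := by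
        intro a b hab
        have h9 := (buildPerm hsn B hB τ).injective hab
        rw [Fin.mk_eq_mk] at h9
        exact Fin.ext h9
      rw [Finset.card_image_of_injective _ hinj, hB]
      simp
  have hAA : A = A' := by
    have e1 := himg A hA σ
    have e2 := himg A' hA' σ'
    rw [h] at e1
    exact e1.trans e2.symm
  subst hAA
  refine ⟨rfl, ?_⟩
  ext i
  have h2 : buildPerm hsn A hA σ ⟨(i : ℕ), by omega⟩
      = buildPerm hsn A hA' σ' ⟨(i : ℕ), by omega⟩ := by rw [h]
  rw [buildPerm_apply_lt hsn A hA σ (i : ℕ) (by omega) i.2,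
    buildPerm_apply_lt hsn A hA' σ' (i : ℕ) (by omega) i.2] at h2
  have h3 := (A.orderEmbOfFin hA).injective h2
  have h4 : (⟨(i : ℕ), i.2⟩ : Fin s) = i := rfl
  rw [h4] at h3
  exact congrArg Fin.val h3

lemma strictMono_of_lt_succ' {m : ℕ} {α : Type*} [Preorder α] (f : Fin m → α)
    (h : ∀ i : ℕ, ∀ hi : i + 1 < m, f ⟨i, by omega⟩ < f ⟨i + 1, hi⟩) : StrictMono f := by
  cases m with
  | zero => intro a; exact absurd a.2 (by omega)
  | succ k =>
    rw [Fin.strictMono_iff_lt_succ]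
    intro i
    have h5 := h i.val (by omega)
    have h1 : (⟨i.val, by omega⟩ : Fin (k + 1)) = i.castSucc := rfl
    have h2 : (⟨i.val + 1, by omega⟩ : Fin (k + 1)) = i.succ := rfl
    rwa [h1, h2] at h5

lemma exists_buildPerm {n s : ℕ} (hsn : s < n) {S : Finset ℕ}
    (hmax : ∀ t ∈ S, t ≤ s)
    (π : Equiv.Perm (Fin n)) (hπ : descentSet n π ⊆ S) :
    ∃ (A : Finset (Fin n)) (hA : A.card = s) (σ : Equiv.Perm (Fin s)),
      descentSet s σ ⊆ S.erase s ∧ buildPerm hsn.le A hA σ = π := by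
  set A : Finset (Fin n) :=
    Finset.image (fun i : Fin s => π ⟨(i : ℕ), by omega⟩) Finset.univ with hAdef
  have hinj : Function.Injective (fun i : Fin s => π ⟨(i : ℕ), by omega⟩) := by
    intro a b hab
    have h9 := π.injective hab
    rw [Fin.mk_eq_mk] at h9
    exact Fin.ext h9
  have hA : A.card = s := by
    rw [hAdef, Finset.card_image_of_injective _ hinj]; simp
  have hmemA : ∀ i : Fin s, π ⟨(i : ℕ), by omega⟩ ∈ A := by
    intro i; exact Finset.mem_image_of_mem _ (Finset.mem_univ i)
  set τ : Fin s → Fin s := fun i =>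
    (A.orderIsoOfFin hA).symm ⟨π ⟨(i : ℕ), by omega⟩, hmemA i⟩ with hτdef
  have hτinj : Function.Injective τ := by
    intro a b hab
    have h1 := (A.orderIsoOfFin hA).symm.injective hab
    have h2 : π ⟨(a : ℕ), by omega⟩ = π ⟨(b : ℕ), by omega⟩ := congrArg Subtype.val h1
    have h9 := π.injective h2
    rw [Fin.mk_eq_mk] at h9
    exact Fin.ext h9
  set σ : Equiv.Perm (Fin s) := Equiv.ofBijective τ (Finite.injective_iff_bijective.mp hτinj)
    with hσdef
  have hσapp : ∀ i : Fin s, σ i = τ i := fun i => rfl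
  have hτeval : ∀ i : Fin s, A.orderEmbOfFin hA (τ i) = π ⟨(i : ℕ), by omega⟩ := by
    intro i
    have h5 := (A.orderIsoOfFin hA).apply_symm_apply ⟨π ⟨(i : ℕ), by omega⟩, hmemA i⟩
    have h6 := congrArg Subtype.val h5
    rwa [Finset.coe_orderIsoOfFin_apply] at h6
  refine ⟨A, hA, σ, ?_, ?_⟩
  · intro i hi
    rw [descentSet, Finset.mem_filter, Finset.mem_Ico] at hi
    obtain ⟨⟨hi1, his⟩, hd⟩ := hi
    have hd := hd his
    rw [hσapp, hσapp, hτdef] at hd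
    have h2 := (A.orderIsoOfFin hA).symm.lt_iff_lt.mp hd
    rw [Subtype.mk_lt_mk] at h2
    have h3 : i ∈ descentSet n π := by
      rw [descentSet, Finset.mem_filter, Finset.mem_Ico]
      refine ⟨⟨hi1, by omega⟩, fun h => ?_⟩
      exact h2
    exact Finset.mem_erase.mpr ⟨by omega, hπ h3⟩
  · ext x
    by_cases hx : (x : ℕ) < s
    · have hxeq : x = (⟨(x : ℕ), x.2⟩ : Fin n) := rfl
      rw [hxeq, buildPerm_apply_lt hsn.le A hA σ (x : ℕ) x.2 hx]
      rw [hσapp, hτeval]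
    · have hF : ∀ k : Fin (n - s), π ⟨s + (k : ℕ), by omega⟩ ∈ Aᶜ := by
        intro k
        rw [Finset.mem_compl]
        intro hmem
        obtain ⟨j, -, hj⟩ := Finset.mem_image.mp hmem
        have h7 := π.injective hj
        rw [Fin.mk_eq_mk] at h7
        omega
      have hFmono : StrictMono (fun k : Fin (n - s) => π ⟨s + (k : ℕ), by omega⟩) := by
        apply strictMono_of_lt_succ'
        intro i hi
        have hj : s + i + 1 ∉ S := by
          intro hmem
          have := hmax _ hmem
          omega
        have hj2 : s + i + 1 ∉ descentSet n π := fun h => hj (hπ h)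
        rw [descentSet, Finset.mem_filter, Finset.mem_Ico] at hj2
        push_neg at hj2
        obtain ⟨hlt, hnd⟩ := hj2 ⟨by omega, by omega⟩
        have heq1 : (⟨s + i + 1 - 1, by omega⟩ : Fin n) = ⟨s + i, by omega⟩ := by
          rw [Fin.mk_eq_mk]; omega
        rw [heq1] at hnd
        have h9 : π ⟨s + i, by omega⟩ ≤ π ⟨s + i + 1, hlt⟩ := hnd
        rcases lt_or_eq_of_le h9 with h3 | h3
        · exact h3
        · exfalso
          have h10 := π.injective h3
          rw [Fin.mk_eq_mk] at h10
          omega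
      have huniq := Finset.orderEmbOfFin_unique (compl_card hA)
        (f := fun k : Fin (n - s) => π ⟨s + (k : ℕ), by omega⟩)
        (fun k => hF k) hFmono
      have hxeq : x = (⟨(x : ℕ), x.2⟩ : Fin n) := rfl
      rw [hxeq, buildPerm_apply_ge hsn.le A hA σ (x : ℕ) x.2 hx]
      rw [← congrFun huniq ⟨(x : ℕ) - s, by omega⟩]
      have harg : (⟨s + (((⟨(x : ℕ) - s, by omega⟩ : Fin (n - s))) : ℕ), by omega⟩ : Fin n)
          = ⟨(x : ℕ), x.2⟩ := by
        rw [Fin.mk_eq_mk]; simp only [Fin.val_mk]; omega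
      exact congrArg (fun y : Fin n => ((π y : Fin n) : ℕ)) harg

lemma alpha_eq (S : Finset ℕ) : ∀ n : ℕ, S ⊆ Finset.Ico 1 n →
    (Finset.univ.filter fun π : Equiv.Perm (Fin n) => descentSet n π ⊆ S).card = flagF n S := by
  induction S using Finset.strongInduction with
  | _ S ih =>
    intro n hS
    rcases S.eq_empty_or_nonempty with rfl | hne
    · have hfil : (Finset.univ.filter
          fun π : Equiv.Perm (Fin n) => descentSet n π ⊆ (∅ : Finset ℕ)) = {1} := by
        ext π
        simp only [Finset.mem_filter, Finset.mem_univ, true_and, Finset.subset_empty,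
          Finset.mem_singleton]
        constructor
        · exact eq_one_of_descentSet_empty π
        · rintro rfl; exact descentSet_one n
      rw [hfil, Finset.card_singleton]
      simp [flagF]
    · set s := S.max' hne with hsdef
      have hsS : s ∈ S := S.max'_mem hne
      have hs1 : 1 ≤ s := (Finset.mem_Ico.mp (hS hsS)).1
      have hsn : s < n := (Finset.mem_Ico.mp (hS hsS)).2
      have hmax : ∀ t ∈ S, t ≤ s := fun t ht => S.le_max' t ht
      have hT : S.erase s ⊆ Finset.Ico 1 s := by
        intro t ht
        obtain ⟨hts, htS⟩ := Finset.mem_erase.mp ht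
        rw [Finset.mem_Ico]
        exact ⟨(Finset.mem_Ico.mp (hS htS)).1, lt_of_le_of_ne (hmax t htS) hts⟩
      have hIH := ih (S.erase s) (Finset.erase_ssubset hsS) s hT
      have hbij : ((Finset.univ.powersetCard s : Finset (Finset (Fin n))) ×ˢ
          (Finset.univ.filter fun σ : Equiv.Perm (Fin s) => descentSet s σ ⊆ S.erase s)).card
          = (Finset.univ.filter fun π : Equiv.Perm (Fin n) => descentSet n π ⊆ S).card := by
      
        refine Finset.card_bij
          (fun p hp => buildPerm hsn.le p.1
            (Finset.mem_powersetCard.mp (Finset.mem_product.mp hp).1).2 p.2) ?_ ?_ ?_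
        · intro p hp
          rw [Finset.mem_filter]
          refine ⟨Finset.mem_univ _, ?_⟩
          exact descentSet_buildPerm_subset hsn hsS p.1 _ p.2
            ((Finset.mem_filter.mp (Finset.mem_product.mp hp).2).2)
        · intro p hp q hq heq
          obtain ⟨h1, h2⟩ := buildPerm_injective hsn.le _ _ heq
          exact Prod.ext h1 h2
        · intro π hπ
          obtain ⟨A, hA, σ, hσ, heq⟩ := exists_buildPerm hsn hmax π
            ((Finset.mem_filter.mp hπ).2)
          refine ⟨⟨A, σ⟩, ?_, heq⟩
          rw [Finset.mem_product]
          exact ⟨Finset.mem_powersetCard.mpr ⟨Finset.subset_univ _, hA⟩,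
            Finset.mem_filter.mpr ⟨Finset.mem_univ _, hσ⟩⟩
      rw [← hbij, Finset.card_product, Finset.card_powersetCard, Finset.card_univ,
        Fintype.card_fin, hIH]
      rw [flagF_rec hne, mul_comm]

lemma sum_beta (n : ℕ) (S : Finset ℕ) (hS : S ⊆ Finset.Ico 1 n) :
    ∑ T ∈ S.powerset, beta n T = flagF n S := by
  rw [← alpha_eq S n hS]
  rw [Finset.card_eq_sum_card_fiberwise (f := descentSet n) (t := S.powerset)
    (fun π hπ => Finset.mem_powerset.mpr (Finset.mem_filter.mp hπ).2)]
  apply Finset.sum_congr rfl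
  intro T hT
  rw [beta]
  congr 1
  rw [Finset.filter_filter]
  apply Finset.filter_congr
  intro π hπ
  constructor
  · exact fun h => ⟨h ▸ Finset.mem_powerset.mp hT, h⟩
  · exact fun h => h.2

end Main

section Mod2

lemma beta_zmod (n : ℕ) (S : Finset ℕ) (hS : S ⊆ Finset.Ico 1 n) :
    (beta n S : ZMod 2) = ∑ T ∈ S.powerset, (flagF n T : ZMod 2) := by
  have h1 : ∀ T ∈ S.powerset, (flagF n T : ZMod 2) = ∑ U ∈ T.powerset, (beta n U : ZMod 2) := by
    intro T hT
    rw [← Nat.cast_sum, sum_beta n T ((Finset.mem_powerset.mp hT).trans hS)]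
  rw [Finset.sum_congr rfl h1]
  have h2 : ∀ T ∈ S.powerset, ∑ U ∈ T.powerset, (beta n U : ZMod 2)
      = ∑ U ∈ S.powerset, if U ⊆ T then (beta n U : ZMod 2) else 0 := by
    intro T hT
    rw [← Finset.sum_filter]
    congr 1
    ext U
    simp only [Finset.mem_powerset, Finset.mem_filter]
    constructor
    · exact fun h => ⟨h.trans (Finset.mem_powerset.mp hT), h⟩
    · exact fun h => h.2
  rw [Finset.sum_congr rfl h2, Finset.sum_comm]
  have h3 : ∀ U ∈ S.powerset, ∑ T ∈ S.powerset, (if U ⊆ T then (beta n U : ZMod 2) else 0)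
      = ((Finset.Icc U S).card : ZMod 2) * beta n U := by
    intro U hU
    rw [← Finset.sum_filter, Finset.sum_const]
    have hicc : S.powerset.filter (fun T => U ⊆ T) = Finset.Icc U S := by
      ext T
      simp only [Finset.mem_powerset, Finset.mem_filter, Finset.mem_Icc]
      rw [Finset.le_iff_subset, Finset.le_iff_subset]
      tauto
    rw [hicc, nsmul_eq_mul]
  rw [Finset.sum_congr rfl h3]
  have h4 : ∀ U ∈ S.powerset, ((Finset.Icc U S).card : ZMod 2) * beta n U
      = if U = S then (beta n S : ZMod 2) else 0 := by
    intro U hU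
    have hUS := Finset.mem_powerset.mp hU
    rw [Finset.card_Icc_finset hUS]
    by_cases h : U = S
    · subst h; simp
    · rw [if_neg h]
      have hlt : U.card < S.card :=
        Finset.card_lt_card (lt_of_le_of_ne hUS h)
      obtain ⟨k, hk⟩ : ∃ k, S.card - U.card = k + 1 := ⟨S.card - U.card - 1, by omega⟩
      rw [hk, pow_succ]
      have h2 : ((2 : ℕ) : ZMod 2) = 0 := by decide
      rw [Nat.cast_mul, h2, mul_zero, zero_mul]
  rw [Finset.sum_congr rfl h4, Finset.sum_ite_eq' S.powerset S]
  simp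

end Mod2

/-- The descent set statistic `β_n(S)` is congruent modulo 2 to the number of
subsets `T ⊆ S` whose associated composition of `n` has an odd multinomial
coefficient (equivalently, sums to `n` with no carries in base 2); that is, to
the reduced Euler characteristic of the induced subcomplex `Δ_n|_S`. -/
theorem beta_modEq_euler (n : ℕ) (hn : 1 ≤ n) (S : Finset ℕ)
    (hS : S ⊆ Finset.Ico 1 n) :
    beta n S ≡ (S.powerset.filter fun T => Odd (flagF n T)).card [MOD 2] := by
  rw [← ZMod.natCast_eq_natCast_iff]
  rw [beta_zmod n S hS]
  have h1 : ∀ T ∈ S.powerset, (flagF n T : ZMod 2)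
      = if Odd (flagF n T) then (1 : ZMod 2) else 0 := by
    intro T _
    rcases Nat.even_or_odd (flagF n T) with h | h
    · rw [if_neg (Nat.not_odd_iff_even.mpr h)]
      obtain ⟨k, hk⟩ := h
      rw [hk]
      push_cast
      exact CharTwo.add_self_eq_zero _
    · rw [if_pos h]
      obtain ⟨k, hk⟩ := h
      rw [hk]
      push_cast
      rw [two_mul, CharTwo.add_self_eq_zero, zero_add]
  rw [Finset.sum_congr rfl h1, Finset.sum_boole]
end

section
/- Let m be an even positive integer and n a positive integer. For 0 ≤ j ≤ m−1 let a_{m,j} be the number of subsets S ⊆ [n−1] with β_n(S) ≡ j (mod m), with indices of a read modulo m. If a_{m,j} = a_{m,−j} for all integers j and a_{m,j} = a_{m, m/2 − j} for all integers j, then the cyclotomic polynomial Φ_m(t) divides the descent set polynomial Q_n(t). -/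
/-- `a_{m,j}`: the number of subsets `S ⊆ [n-1]` with `β_n(S) ≡ j (mod m)`,
with the index `j` taken modulo `m`. -/
def acount (n m : ℕ) (j : ZMod m) : ℕ :=
  ((Finset.Ico 1 n).powerset.filter fun S => (beta n S : ZMod m) = j).card

/-- If `m` is even and the counts satisfy `a_{m,j} = a_{m,-j}` and
`a_{m,j} = a_{m,m/2-j}` for all `j`, then the cyclotomic polynomial `Φ_m`
divides the descent set polynomial `Q_n(t)`. -/
theorem cyclotomic_dvd_of_acount (m n : ℕ) (hm : 0 < m) (hme : Even m) (hn : 0 < n)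
    (h1 : ∀ j : ZMod m, acount n m j = acount n m (-j))
    (h2 : ∀ j : ZMod m, acount n m j = acount n m (((m / 2 : ℕ) : ZMod m) - j)) :
    Polynomial.cyclotomic m ℤ ∣ Q n := by
  haveI : NeZero m := ⟨hm.ne'⟩
  set ζ : ℂ := Complex.exp (2 * Real.pi * Complex.I / m) with hzdef
  have hζ : IsPrimitiveRoot ζ m := Complex.isPrimitiveRoot_exp m hm.ne'
  -- key facts about ζ
  have hord : orderOf ζ = m := (hζ.eq_orderOf).symm
  have hzm : ζ ^ m = 1 := hζ.pow_eq_one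
  have hmod : ∀ k : ℕ, ζ ^ (k % m) = ζ ^ k := by
    intro k; rw [← hord]; exact pow_mod_orderOf ζ k
  -- ζ^(m/2) = -1
  have hm2 : 0 < m / 2 := by obtain ⟨k, hk⟩ := hme; omega
  have hm2' : m / 2 < m := Nat.div_lt_self hm one_lt_two
  have hneg : ζ ^ (m / 2) = -1 := by
    have hsq : ζ ^ (m / 2) * ζ ^ (m / 2) = 1 := by
      rw [← pow_add]
      have : m / 2 + m / 2 = m := by
        obtain ⟨k, hk⟩ := hme; omega
      rw [this, hzm]
    rcases mul_self_eq_one_iff.mp hsq with h | h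
    · exact absurd h (hζ.pow_ne_one_of_pos_of_lt hm2.ne' hm2')
    · exact h
  set c : ZMod m := ((m / 2 : ℕ) : ZMod m) with hc
  have hcval : c.val = m / 2 := by
    rw [hc, ZMod.val_natCast, Nat.mod_eq_of_lt hm2']
  -- a_{j} = a_{j + c}
  have hshift : ∀ j : ZMod m, acount n m j = acount n m (j + c) := by
    intro j
    rw [h1 j, h2 (-j), sub_neg_eq_add, add_comm]
  -- ζ^((j+c).val) = - ζ^(j.val)
  have hpow : ∀ j : ZMod m, ζ ^ (j + c).val = -(ζ ^ j.val) := by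
    intro j
    rw [ZMod.val_add, hmod, pow_add, hcval, hneg, mul_neg_one]
  -- the grouped sum
  set T : ℂ := ∑ j : ZMod m, (acount n m j : ℂ) * ζ ^ j.val with hT
  -- aeval ζ (Q n) = T
  have hQT : Polynomial.aeval ζ (Q n) = T := by
    rw [Q, map_sum]
    simp only [map_pow, Polynomial.aeval_X]
    have step : ∀ S ∈ (Finset.Ico 1 n).powerset,
        ζ ^ beta n S = ζ ^ ((beta n S : ZMod m)).val := by
      intro S _
      rw [ZMod.val_natCast, hmod]
    rw [Finset.sum_congr rfl step]
    rw [← Finset.sum_fiberwise_of_maps_to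
      (g := fun S => ((beta n S : ZMod m))) (t := Finset.univ)
      (fun S _ => Finset.mem_univ _)]
    refine Finset.sum_congr rfl fun j _ => ?_
    have hcg : ∀ S ∈ (Finset.Ico 1 n).powerset.filter
        (fun i => ((beta n i : ZMod m)) = j),
        ζ ^ ((beta n S : ZMod m)).val = ζ ^ j.val := by
      intro S hS
      rw [(Finset.mem_filter.mp hS).2]
    rw [Finset.sum_congr rfl hcg, Finset.sum_const, acount, nsmul_eq_mul]
  -- T = -T
  have hTT : T = -T := by
    calc T = ∑ j : ZMod m, (acount n m (j + c) : ℂ) * ζ ^ (j + c).val := by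
            rw [hT]
            exact (Fintype.sum_equiv (Equiv.addRight c)
              (fun j => (acount n m (j + c) : ℂ) * ζ ^ (j + c).val)
              (fun j => (acount n m j : ℂ) * ζ ^ j.val) (fun j => rfl)).symm
      _ = ∑ j : ZMod m, -((acount n m j : ℂ) * ζ ^ j.val) := by
            refine Finset.sum_congr rfl fun j _ => ?_
            rw [← hshift j, hpow j, mul_neg]
      _ = -T := by rw [hT, ← Finset.sum_neg_distrib]
  have hT0 : T = 0 := by linear_combination hTT / 2
  -- conclude
  have hint : IsIntegral ℤ ζ := hζ.isIntegral hm
  rw [Polynomial.cyclotomic_eq_minpoly hζ hm]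
  exact minpoly.isIntegrallyClosed_dvd hint (by rw [hQT, hT0])
end

section
/- Let n = 2^b + 2^a with b > a ≥ 0, and let s be an odd positive integer such that s divides C(n, 2^a). Suppose further that there exists an integer k with 1 ≤ k ≤ n−1, k ∉ {2^a, 2^b}, such that s divides C(n, k). Then the cyclotomic polynomial Φ_{2s}(t) divides the descent set polynomial Q_n(t). -/
lemma mem_descentSet {n : ℕ} {π : Equiv.Perm (Fin n)} {i : ℕ} (h1 : 1 ≤ i) (hn : i < n) :
    i ∈ descentSet n π ↔ π ⟨i, hn⟩ < π ⟨i - 1, by omega⟩ := by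
  simp [descentSet, Finset.mem_filter, Finset.mem_Ico, h1, hn]

lemma descentSet_subset (n : ℕ) (π : Equiv.Perm (Fin n)) :
    descentSet n π ⊆ Finset.Ico 1 n := Finset.filter_subset _ _

lemma beta_empty (n : ℕ) : beta n ∅ = 1 := by
  rw [beta, Finset.card_eq_one]
  refine ⟨Equiv.refl _, ?_⟩
  ext π
  simp only [Finset.mem_filter, Finset.mem_univ, true_and, Finset.mem_singleton]
  constructor
  · intro h
    have mono : StrictMono π := by
      cases n with
      | zero => intro i; exact absurd i.isLt (by omega)
      | succ m =>
        rw [Fin.strictMono_iff_lt_succ]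
        intro i
        have hnd : (i + 1 : ℕ) ∉ descentSet (m+1) π := by rw [h]; exact Finset.notMem_empty _
        rw [mem_descentSet (by omega) (by omega)] at hnd
        push_neg at hnd
        simp only [Nat.add_sub_cancel] at hnd
        have hne : π ⟨(i:ℕ), by omega⟩ ≠ π ⟨(i:ℕ)+1, by omega⟩ := by
          intro hcon
          have := π.injective hcon
          simp [Fin.ext_iff] at this
        have : π ⟨(i:ℕ), by omega⟩ < π ⟨(i:ℕ)+1, by omega⟩ := lt_of_le_of_ne hnd hne
        exact this
    have heq : StrictMono.orderIsoOfSurjective π mono π.surjective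
         = OrderIso.refl (Fin n) := Subsingleton.elim _ _
    ext i
    have hcoe := congrFun (congrArg (fun e : Fin n ≃o Fin n => (e : Fin n → Fin n)) heq) i
    simp only [StrictMono.coe_orderIsoOfSurjective, OrderIso.coe_refl, id_eq] at hcoe
    simpa using congrArg Fin.val hcoe
  · intro h
    subst h
    ext i
    simp only [descentSet, Finset.mem_filter, Finset.mem_Ico, Finset.notMem_empty, iff_false]
    rintro ⟨⟨h1, h2⟩, h3⟩
    have := h3 h2
    simp only [Equiv.refl_apply, Fin.lt_def] at this
    omega


section Split

variable {n k : ℕ}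

/-- The function assembling a permutation from a `k`-set and two smaller permutations. -/
def assembleFun (hkn : k < n) (A : Finset (Fin n)) (hA : A.card = k) (hAc : Aᶜ.card = n - k)
    (σ : Equiv.Perm (Fin k)) (τ : Equiv.Perm (Fin (n - k))) : Fin n → Fin n := fun i =>
  if h : (i : ℕ) < k then A.orderEmbOfFin hA (σ ⟨i, h⟩)
  else Aᶜ.orderEmbOfFin hAc (τ ⟨(i : ℕ) - k, by have := i.isLt; omega⟩)

lemma assembleFun_injective (hkn : k < n) (A : Finset (Fin n)) (hA : A.card = k) (hAc : Aᶜ.card = n - k)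
    (σ : Equiv.Perm (Fin k)) (τ : Equiv.Perm (Fin (n - k))) :
    Function.Injective (assembleFun hkn A hA hAc σ τ) := by
  intro i j heq
  unfold assembleFun at heq
  by_cases hi : (i : ℕ) < k <;> by_cases hj : (j : ℕ) < k
  · rw [dif_pos hi, dif_pos hj] at heq
    have h2 := σ.injective ((A.orderEmbOfFin hA).injective heq)
    have := congrArg Fin.val h2
    simp only at this
    exact Fin.ext this
  · rw [dif_pos hi, dif_neg hj] at heq
    have h1 := A.orderEmbOfFin_mem hA (σ ⟨i, hi⟩)
    have h2 := Aᶜ.orderEmbOfFin_mem hAc (τ ⟨(j : ℕ) - k, by have := j.isLt; omega⟩)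
    rw [heq] at h1
    rw [Finset.mem_compl] at h2
    exact absurd h1 h2
  · rw [dif_neg hi, dif_pos hj] at heq
    have h1 := A.orderEmbOfFin_mem hA (σ ⟨j, hj⟩)
    have h2 := Aᶜ.orderEmbOfFin_mem hAc (τ ⟨(i : ℕ) - k, by have := i.isLt; omega⟩)
    rw [← heq] at h1
    rw [Finset.mem_compl] at h2
    exact absurd h1 h2
  · rw [dif_neg hi, dif_neg hj] at heq
    have h2 := τ.injective ((Aᶜ.orderEmbOfFin hAc).injective heq)
    have := congrArg Fin.val h2
    simp only at this
    have hi' := i.isLt; have hj' := j.isLt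
    exact Fin.ext (by omega)

/-- The assembled permutation. -/
noncomputable def assemblePerm (hkn : k < n) (A : Finset (Fin n)) (hA : A.card = k) (hAc : Aᶜ.card = n - k)
    (σ : Equiv.Perm (Fin k)) (τ : Equiv.Perm (Fin (n - k))) : Equiv.Perm (Fin n) :=
  Equiv.ofBijective _
    ((Finite.injective_iff_bijective).mp (assembleFun_injective hkn A hA hAc σ τ))

lemma assemblePerm_apply (hkn : k < n) (A : Finset (Fin n)) (hA : A.card = k) (hAc : Aᶜ.card = n - k)
    (σ : Equiv.Perm (Fin k)) (τ : Equiv.Perm (Fin (n - k))) (i : Fin n) :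
    assemblePerm hkn A hA hAc σ τ i = assembleFun hkn A hA hAc σ τ i := rfl

end Split

section Split
variable {n k : ℕ}

lemma descent_compat (hk1 : 1 ≤ k) (hkn : k < n) (π : Equiv.Perm (Fin n))
    (A : Finset (Fin n)) (hA : A.card = k) (hAc : Aᶜ.card = n - k)
    (σ : Equiv.Perm (Fin k)) (τ : Equiv.Perm (Fin (n - k)))
    (h1 : ∀ i : Fin k, π (Fin.castLE hkn.le i) = A.orderEmbOfFin hA (σ i))
    (h2 : ∀ j : Fin (n - k), π ⟨k + (j : ℕ), by have := j.isLt; omega⟩ = Aᶜ.orderEmbOfFin hAc (τ j)) :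
    (descentSet n π).erase k = descentSet k σ ∪ (descentSet (n - k) τ).image (· + k) := by
  ext j
  simp only [Finset.mem_erase, Finset.mem_union, Finset.mem_image]
  by_cases hj0 : 1 ≤ j ∧ j < n
  · obtain ⟨hj1, hjn⟩ := hj0
    rcases lt_trichotomy j k with hlt | heq | hgt
    · -- j < k
      have hmem : j ∈ descentSet n π ↔ j ∈ descentSet k σ := by
        rw [mem_descentSet hj1 hjn, mem_descentSet hj1 hlt]
        have e1 : π ⟨j, hjn⟩ = A.orderEmbOfFin hA (σ ⟨j, hlt⟩) := h1 ⟨j, hlt⟩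
        have e2 : π ⟨j - 1, by omega⟩ = A.orderEmbOfFin hA (σ ⟨j - 1, by omega⟩) :=
          h1 ⟨j - 1, by omega⟩
        rw [e1, e2, OrderEmbedding.lt_iff_lt]
      constructor
      · rintro ⟨-, hd⟩
        exact Or.inl (hmem.mp hd)
      · rintro (hd | ⟨x, hx, rfl⟩)
        · exact ⟨by omega, hmem.mpr hd⟩
        · have := (descentSet_subset _ τ) hx
          rw [Finset.mem_Ico] at this
          omega
    · -- j = k
      subst heq
      constructor
      · rintro ⟨hne, -⟩; exact absurd rfl hne
      · rintro (hd | ⟨x, hx, hxe⟩)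
        · have := (descentSet_subset _ σ) hd
          rw [Finset.mem_Ico] at this
          omega
        · have := (descentSet_subset _ τ) hx
          rw [Finset.mem_Ico] at this
          omega
    · -- k < j
      have hj1' : 1 ≤ j - k := by omega
      have hjn' : j - k < n - k := by omega
      have hmem : j ∈ descentSet n π ↔ (j - k) ∈ descentSet (n - k) τ := by
        rw [mem_descentSet hj1 hjn, mem_descentSet hj1' hjn']
        have e1 : π ⟨j, hjn⟩ = Aᶜ.orderEmbOfFin hAc (τ ⟨j - k, hjn'⟩) := by
          have hx := h2 ⟨j - k, hjn'⟩
          have hidx : (⟨k + ((⟨j - k, hjn'⟩ : Fin (n - k)) : ℕ), by omega⟩ : Fin n)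
              = ⟨j, hjn⟩ := by
            apply Fin.ext; simp; omega
          rwa [hidx] at hx
        have e2 : π ⟨j - 1, by omega⟩ = Aᶜ.orderEmbOfFin hAc (τ ⟨j - k - 1, by omega⟩) := by
          have hx := h2 ⟨j - k - 1, by omega⟩
          have hidx : (⟨k + ((⟨j - k - 1, by omega⟩ : Fin (n - k)) : ℕ), by omega⟩ : Fin n)
              = ⟨j - 1, by omega⟩ := by
            apply Fin.ext; simp; omega
          rwa [hidx] at hx
        rw [e1, e2, OrderEmbedding.lt_iff_lt]
      constructor
      · rintro ⟨-, hd⟩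
        exact Or.inr ⟨j - k, hmem.mp hd, by omega⟩
      · rintro (hd | ⟨x, hx, rfl⟩)
        · have := (descentSet_subset _ σ) hd
          rw [Finset.mem_Ico] at this
          omega
        · have : x = x + k - k := by omega
          exact ⟨by omega, hmem.mpr (this ▸ hx)⟩
  · -- j outside Ico 1 n : both sides empty
    push_neg at hj0
    constructor
    · rintro ⟨-, hd⟩
      have := (descentSet_subset _ π) hd
      rw [Finset.mem_Ico] at this
      omega
    · rintro (hd | ⟨x, hx, rfl⟩)
      · have := (descentSet_subset _ σ) hd
        rw [Finset.mem_Ico] at this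
        omega
      · have := (descentSet_subset _ τ) hx
        rw [Finset.mem_Ico] at this
        omega

end Split

section Split
variable {n k : ℕ}

lemma orderEmbOfFin_congr {α : Type*} [LinearOrder α] {A B : Finset α} {m : ℕ}
    (h : A = B) (hA : A.card = m) (hB : B.card = m) (i : Fin m) :
    A.orderEmbOfFin hA i = B.orderEmbOfFin hB i := by subst h; rfl

lemma assemble_compat1 (hkn : k < n) (A : Finset (Fin n)) (hA : A.card = k)
    (hAc : Aᶜ.card = n - k) (σ : Equiv.Perm (Fin k)) (τ : Equiv.Perm (Fin (n - k)))
    (i : Fin k) :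
    assemblePerm hkn A hA hAc σ τ (Fin.castLE hkn.le i) = A.orderEmbOfFin hA (σ i) := by
  rw [assemblePerm_apply]
  unfold assembleFun
  rw [dif_pos (show ((Fin.castLE hkn.le i : Fin n) : ℕ) < k from i.isLt)]
  exact congrArg (A.orderEmbOfFin hA) (congrArg σ (Fin.ext rfl))

lemma assemble_compat2 (hkn : k < n) (A : Finset (Fin n)) (hA : A.card = k)
    (hAc : Aᶜ.card = n - k) (σ : Equiv.Perm (Fin k)) (τ : Equiv.Perm (Fin (n - k)))
    (j : Fin (n - k)) :
    assemblePerm hkn A hA hAc σ τ ⟨k + (j : ℕ), by have := j.isLt; omega⟩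
      = Aᶜ.orderEmbOfFin hAc (τ j) := by
  rw [assemblePerm_apply]
  unfold assembleFun
  rw [dif_neg (show ¬ (k + (j : ℕ) < k) by omega)]
  congr 1
  apply Fin.ext
  simp

lemma S_split {S : Finset ℕ} (hS : S ⊆ Finset.Ico 1 n) (hkS : k ∉ S) :
    S.filter (· < k) ∪ ((S.filter fun i => k < i).image (· - k)).image (· + k) = S := by
  ext x
  simp only [Finset.mem_union, Finset.mem_filter, Finset.mem_image]
  constructor
  · rintro (⟨hx, -⟩ | ⟨y, ⟨z, ⟨hz, hzk⟩, rfl⟩, rfl⟩)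
    · exact hx
    · have : z - k + k = z := by omega
      rwa [this]
  · intro hx
    have hxk : x ≠ k := fun h => hkS (h ▸ hx)
    rcases lt_or_gt_of_ne hxk with h | h
    · exact Or.inl ⟨hx, h⟩
    · exact Or.inr ⟨x - k, ⟨x, ⟨hx, h⟩, rfl⟩, by omega⟩

lemma union_parts {D₁ S₁ D₂ S₂ : Finset ℕ}
    (hD₁ : D₁ ⊆ Finset.Ico 1 k) (hS₁ : S₁ ⊆ Finset.Ico 1 k)
    (hD₂ : D₂ ⊆ Finset.Ico 1 (n - k)) (hS₂ : S₂ ⊆ Finset.Ico 1 (n - k))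
    (h : D₁ ∪ D₂.image (· + k) = S₁ ∪ S₂.image (· + k)) : D₁ = S₁ ∧ D₂ = S₂ := by
  have hmem : ∀ x, (x ∈ D₁ ∨ ∃ y ∈ D₂, y + k = x) ↔ (x ∈ S₁ ∨ ∃ y ∈ S₂, y + k = x) := by
    intro x
    have := Finset.ext_iff.mp h x
    simpa only [Finset.mem_union, Finset.mem_image] using this
  constructor
  · ext x
    by_cases hx : x < k
    · have := hmem x
      have h2 : ¬ ∃ y ∈ D₂, y + k = x := by
        rintro ⟨y, hy, rfl⟩
        have := hD₂ hy; rw [Finset.mem_Ico] at this; omega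
      have h3 : ¬ ∃ y ∈ S₂, y + k = x := by
        rintro ⟨y, hy, rfl⟩
        have := hS₂ hy; rw [Finset.mem_Ico] at this; omega
      constructor
      · intro hh
        rcases (hmem x).mp (Or.inl hh) with h' | h'
        · exact h'
        · exact absurd h' h3
      · intro hh
        rcases (hmem x).mpr (Or.inl hh) with h' | h'
        · exact h'
        · exact absurd h' h2
    · constructor
      · intro hh; have := hD₁ hh; rw [Finset.mem_Ico] at this; omega
      · intro hh; have := hS₁ hh; rw [Finset.mem_Ico] at this; omega
  · ext x
    have := hmem (x + k)
    have h2 : x + k ∉ D₁ := fun hh => by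
      have := hD₁ hh; rw [Finset.mem_Ico] at this; omega
    have h3 : x + k ∉ S₁ := fun hh => by
      have := hS₁ hh; rw [Finset.mem_Ico] at this; omega
    have h4 : (∃ y ∈ D₂, y + k = x + k) ↔ x ∈ D₂ := by
      constructor
      · rintro ⟨y, hy, he⟩; have : y = x := by omega
        exact this ▸ hy
      · intro hh; exact ⟨x, hh, rfl⟩
    have h5 : (∃ y ∈ S₂, y + k = x + k) ↔ x ∈ S₂ := by
      constructor
      · rintro ⟨y, hy, he⟩; have : y = x := by omega
        exact this ▸ hy
      · intro hh; exact ⟨x, hh, rfl⟩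
    constructor
    · intro hh
      rcases (hmem (x + k)).mp (Or.inr (h4.mpr hh)) with h' | h'
      · exact absurd h' h3
      · exact h5.mp h'
    · intro hh
      rcases (hmem (x + k)).mpr (Or.inr (h5.mpr hh)) with h' | h'
      · exact absurd h' h2
      · exact h4.mp h'

end Split

open Finset in
theorem beta_split {n k : ℕ} (hk1 : 1 ≤ k) (hkn : k < n) (S : Finset ℕ)
    (hS : S ⊆ Finset.Ico 1 n) (hkS : k ∉ S) :
    beta n S + beta n (insert k S)
      = n.choose k *
        (beta k (S.filter (· < k)) * beta (n - k) ((S.filter fun i => k < i).image (· - k))) := by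
  classical
  set S₁ := S.filter (· < k) with hS₁def
  set S₂ := (S.filter fun i => k < i).image (· - k) with hS₂def
  have hS₁ : S₁ ⊆ Finset.Ico 1 k := by
    intro x hx
    rw [hS₁def, Finset.mem_filter] at hx
    have := hS hx.1; rw [Finset.mem_Ico] at this ⊢; omega
  have hS₂ : S₂ ⊆ Finset.Ico 1 (n - k) := by
    intro x hx
    rw [hS₂def, Finset.mem_image] at hx
    obtain ⟨y, hy, rfl⟩ := hx
    rw [Finset.mem_filter] at hy
    have := hS hy.1; rw [Finset.mem_Ico] at this ⊢; omega
  -- LHS as a single cardinality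
  have hLHS : beta n S + beta n (insert k S)
      = (univ.filter fun π : Equiv.Perm (Fin n) => (descentSet n π).erase k = S).card := by
    have hun : (univ.filter fun π : Equiv.Perm (Fin n) => (descentSet n π).erase k = S)
        = (univ.filter fun π : Equiv.Perm (Fin n) => descentSet n π = S)
          ∪ (univ.filter fun π : Equiv.Perm (Fin n) => descentSet n π = insert k S) := by
      ext π
      simp only [Finset.mem_filter, Finset.mem_union, Finset.mem_univ, true_and]
      constructor
      · intro h
        by_cases hkd : k ∈ descentSet n π
        · right; rw [← h, Finset.insert_erase hkd]
        · left; rw [← h, Finset.erase_eq_of_notMem hkd]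
      · rintro (rfl | h)
        · exact Finset.erase_eq_of_notMem hkS
        · rw [h, Finset.erase_insert hkS]
    have hdisj : Disjoint (univ.filter fun π : Equiv.Perm (Fin n) => descentSet n π = S)
        (univ.filter fun π : Equiv.Perm (Fin n) => descentSet n π = insert k S) := by
      rw [Finset.disjoint_left]
      intro π h1 h2
      rw [Finset.mem_filter] at h1 h2
      rw [h1.2] at h2
      exact hkS (h2.2 ▸ Finset.mem_insert_self k S)
    rw [beta, beta, hun, Finset.card_union_of_disjoint hdisj]
  rw [hLHS]
  -- RHS as a single cardinality
  have hRHS : n.choose k * (beta k S₁ * beta (n - k) S₂)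
      = ((Finset.powersetCard k (univ : Finset (Fin n))) ×ˢ
          ((univ.filter fun σ : Equiv.Perm (Fin k) => descentSet k σ = S₁) ×ˢ
           (univ.filter fun τ : Equiv.Perm (Fin (n - k)) => descentSet (n - k) τ = S₂))).card := by
    rw [Finset.card_product, Finset.card_product, Finset.card_powersetCard, Finset.card_univ,
      Fintype.card_fin, beta, beta]
  rw [hRHS]
  -- the bijection
  refine (Finset.card_bij
    (fun x hx => assemblePerm hkn x.1
      (by
        have := (Finset.mem_product.mp hx).1
        exact (Finset.mem_powersetCard.mp this).2)
      (by
        have := (Finset.mem_product.mp hx).1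
        have hc := (Finset.mem_powersetCard.mp this).2
        rw [Finset.card_compl, hc, Fintype.card_fin])
      x.2.1 x.2.2) ?_ ?_ ?_).symm
  · -- maps into the target
    rintro ⟨A, σ, τ⟩ hx
    simp only [Finset.mem_filter, Finset.mem_univ, true_and]
    obtain ⟨hA', hστ⟩ := Finset.mem_product.mp hx
    obtain ⟨hσ', hτ'⟩ := Finset.mem_product.mp hστ
    rw [Finset.mem_filter] at hσ' hτ'
    have hA := (Finset.mem_powersetCard.mp hA').2
    have hAc : Aᶜ.card = n - k := by rw [Finset.card_compl, hA, Fintype.card_fin]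
    rw [descent_compat hk1 hkn _ A hA hAc σ τ
      (fun i => assemble_compat1 hkn A hA hAc σ τ i)
      (fun j => assemble_compat2 hkn A hA hAc σ τ j), hσ'.2, hτ'.2]
    exact S_split hS hkS
  · -- injectivity
    rintro ⟨A, σ, τ⟩ hx ⟨A', σ', τ'⟩ hx' heq
    obtain ⟨hA'', -⟩ := Finset.mem_product.mp hx
    obtain ⟨hA''', -⟩ := Finset.mem_product.mp hx'
    have hA := (Finset.mem_powersetCard.mp hA'').2
    have hA' := (Finset.mem_powersetCard.mp hA''').2
    have hAc : Aᶜ.card = n - k := by rw [Finset.card_compl, hA, Fintype.card_fin]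
    have hAc' : A'ᶜ.card = n - k := by rw [Finset.card_compl, hA', Fintype.card_fin]
    have happ : ∀ i : Fin n, assemblePerm hkn A hA hAc σ τ i
        = assemblePerm hkn A' hA' hAc' σ' τ' i := by
      intro i
      exact congrFun (congrArg (fun e : Equiv.Perm (Fin n) => (e : Fin n → Fin n)) heq) i
    have hc1 : ∀ i : Fin k, A.orderEmbOfFin hA (σ i) = A'.orderEmbOfFin hA' (σ' i) := by
      intro i
      rw [← assemble_compat1 hkn A hA hAc σ τ i, ← assemble_compat1 hkn A' hA' hAc' σ' τ' i]
      exact happ _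
    have hc2 : ∀ j : Fin (n - k),
        Aᶜ.orderEmbOfFin hAc (τ j) = A'ᶜ.orderEmbOfFin hAc' (τ' j) := by
      intro j
      rw [← assemble_compat2 hkn A hA hAc σ τ j, ← assemble_compat2 hkn A' hA' hAc' σ' τ' j]
      exact happ _
    have hAeq : A = A' := by
      ext v
      have hA1 : v ∈ A ↔ ∃ i : Fin k, A.orderEmbOfFin hA (σ i) = v := by
        constructor
        · intro hv
          have : v ∈ Set.range (A.orderEmbOfFin hA) := by
            rw [Finset.range_orderEmbOfFin]; exact hv
          obtain ⟨i, hi⟩ := this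
          exact ⟨σ.symm i, by rw [Equiv.apply_symm_apply]; exact hi⟩
        · rintro ⟨i, rfl⟩; exact Finset.orderEmbOfFin_mem _ _ _
      have hA2 : v ∈ A' ↔ ∃ i : Fin k, A'.orderEmbOfFin hA' (σ' i) = v := by
        constructor
        · intro hv
          have : v ∈ Set.range (A'.orderEmbOfFin hA') := by
            rw [Finset.range_orderEmbOfFin]; exact hv
          obtain ⟨i, hi⟩ := this
          exact ⟨σ'.symm i, by rw [Equiv.apply_symm_apply]; exact hi⟩
        · rintro ⟨i, rfl⟩; exact Finset.orderEmbOfFin_mem _ _ _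
      rw [hA1, hA2]
      constructor
      · rintro ⟨i, hi⟩; exact ⟨i, by rw [← hc1]; exact hi⟩
      · rintro ⟨i, hi⟩; exact ⟨i, by rw [hc1]; exact hi⟩
    have hσeq : σ = σ' := by
      apply Equiv.ext
      intro i
      apply (A.orderEmbOfFin hA).injective
      rw [hc1 i]
      exact (orderEmbOfFin_congr hAeq.symm hA' hA (σ' i))
    have hτeq : τ = τ' := by
      apply Equiv.ext
      intro j
      apply (Aᶜ.orderEmbOfFin hAc).injective
      rw [hc2 j]
      exact (orderEmbOfFin_congr (by rw [hAeq]) hAc' hAc (τ' j))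
    exact Prod.ext hAeq (Prod.ext hσeq hτeq)
  · -- surjectivity
    intro π hπ
    rw [Finset.mem_filter] at hπ
    have hπS := hπ.2
    set A : Finset (Fin n) := univ.image (fun i : Fin k => π (Fin.castLE hkn.le i)) with hAdef
    have hinj : Function.Injective (fun i : Fin k => π (Fin.castLE hkn.le i)) := by
      intro i j h
      have h2 := π.injective h
      have h3 : (i : ℕ) = (j : ℕ) := by simpa using congrArg Fin.val h2
      exact Fin.ext h3
    have hA : A.card = k := by
      rw [hAdef, Finset.card_image_of_injective _ hinj, Finset.card_univ, Fintype.card_fin]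
    have hAc : Aᶜ.card = n - k := by rw [Finset.card_compl, hA, Fintype.card_fin]
    have hmemA : ∀ i : Fin k, π (Fin.castLE hkn.le i) ∈ A := by
      intro i; rw [hAdef]; exact Finset.mem_image_of_mem _ (Finset.mem_univ i)
    have hmemAc : ∀ j : Fin (n - k), π ⟨k + (j : ℕ), by have := j.isLt; omega⟩ ∈ Aᶜ := by
      intro j
      rw [Finset.mem_compl]
      intro hcon
      have hcon2 : π ⟨k + (j : ℕ), by have := j.isLt; omega⟩
          ∈ univ.image (fun i : Fin k => π (Fin.castLE hkn.le i)) := by rwa [← hAdef]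
      obtain ⟨i, -, hi⟩ := Finset.mem_image.mp hcon2
      have h2 := congrArg Fin.val (π.injective hi)
      simp only [Fin.coe_castLE] at h2
      have := i.isLt
      omega
    set σf : Fin k → Fin k :=
      fun i => (A.orderIsoOfFin hA).symm ⟨π (Fin.castLE hkn.le i), hmemA i⟩ with hσfdef
    have hσinj : Function.Injective σf := by
      intro i j h
      rw [hσfdef] at h
      have h1 := congrArg (A.orderIsoOfFin hA) h
      rw [OrderIso.apply_symm_apply, OrderIso.apply_symm_apply] at h1
      have h2 := congrArg Subtype.val h1
      exact Fin.ext (show (i : ℕ) = (j : ℕ) from congrArg Fin.val (hinj h2))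
    set τf : Fin (n - k) → Fin (n - k) :=
      fun j => (Aᶜ.orderIsoOfFin hAc).symm ⟨π ⟨k + (j : ℕ), by have := j.isLt; omega⟩, hmemAc j⟩
      with hτfdef
    have hτinj : Function.Injective τf := by
      intro i j h
      rw [hτfdef] at h
      have h1 := congrArg (Aᶜ.orderIsoOfFin hAc) h
      rw [OrderIso.apply_symm_apply, OrderIso.apply_symm_apply] at h1
      have h2 := congrArg Subtype.val h1
      simp only at h2
      have h3 := congrArg Fin.val (π.injective h2)
      simp only at h3
      exact Fin.ext (by omega)
    set σ := Equiv.ofBijective σf (Finite.injective_iff_bijective.mp hσinj) with hσdef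
    set τ := Equiv.ofBijective τf (Finite.injective_iff_bijective.mp hτinj) with hτdef
    have hc1 : ∀ i : Fin k, π (Fin.castLE hkn.le i) = A.orderEmbOfFin hA (σ i) := by
      intro i
      show _ = A.orderEmbOfFin hA (σf i)
      rw [hσfdef, ← Finset.coe_orderIsoOfFin_apply, OrderIso.apply_symm_apply]
    have hc2 : ∀ j : Fin (n - k),
        π ⟨k + (j : ℕ), by have := j.isLt; omega⟩ = Aᶜ.orderEmbOfFin hAc (τ j) := by
      intro j
      show _ = Aᶜ.orderEmbOfFin hAc (τf j)
      rw [hτfdef, ← Finset.coe_orderIsoOfFin_apply, OrderIso.apply_symm_apply]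
    have hdc := descent_compat hk1 hkn π A hA hAc σ τ hc1 hc2
    have hun : descentSet k σ ∪ (descentSet (n - k) τ).image (· + k)
        = S₁ ∪ S₂.image (· + k) := by
      rw [← hdc, hπS]
      exact (S_split hS hkS).symm
    obtain ⟨hd1, hd2⟩ := union_parts (descentSet_subset k σ) hS₁
      (descentSet_subset (n - k) τ) hS₂ hun
    refine ⟨⟨A, σ, τ⟩, ?_, ?_⟩
    · rw [Finset.mem_product]
      constructor
      · rw [Finset.mem_powersetCard]
        exact ⟨Finset.subset_univ _, hA⟩
      · rw [Finset.mem_product]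
        constructor
        · rw [Finset.mem_filter]; exact ⟨Finset.mem_univ _, hd1⟩
        · rw [Finset.mem_filter]; exact ⟨Finset.mem_univ _, hd2⟩
    · apply Equiv.ext
      intro i
      rw [assemblePerm_apply]
      unfold assembleFun
      by_cases h : (i : ℕ) < k
      · rw [dif_pos h, ← hc1 ⟨i, h⟩]
        exact congrArg π (Fin.ext rfl)
      · rw [dif_neg h, ← hc2 ⟨(i : ℕ) - k, by have := i.isLt; omega⟩]
        refine congrArg π (Fin.ext ?_)
        have := i.isLt
        simp only
        omega

/-! ### Number-theoretic lemmas -/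

lemma two_dvd_choose_two_pow {c i : ℕ} (h0 : 0 < i) (h1 : i < 2 ^ c) : 2 ∣ (2 ^ c).choose i := by
  by_contra hodd
  have hco : Nat.Coprime (2 ^ c) ((2 ^ c).choose i) :=
    Nat.Coprime.pow_left c (Nat.Prime.coprime_iff_not_dvd Nat.prime_two |>.mpr hodd)
  have hdvd : 2 ^ c ∣ i * (2 ^ c).choose i := by
    have key := Nat.add_one_mul_choose_eq (2 ^ c - 1) (i - 1)
    have h2 : (2 ^ c - 1) + 1 = 2 ^ c := by have := Nat.one_le_two_pow (n := c); omega
    have h3 : (i - 1) + 1 = i := by omega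
    rw [h3, h2] at key
    exact ⟨(2 ^ c - 1).choose (i - 1), by rw [mul_comm]; exact key.symm⟩
  have := (Nat.Coprime.dvd_of_dvd_mul_right hco hdvd)
  have := Nat.le_of_dvd h0 this
  omega

lemma choose_big_even {a b i : ℕ} (hab : a < b) (hi0 : 0 < i) (hin : i < 2 ^ b + 2 ^ a)
    (hia : i ≠ 2 ^ a) (hib : i ≠ 2 ^ b) : 2 ∣ (2 ^ b + 2 ^ a).choose i := by
  rw [Nat.add_choose_eq]
  apply Finset.dvd_sum
  rintro ⟨x, y⟩ hxy
  rw [Finset.HasAntidiagonal.mem_antidiagonal] at hxy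
  simp only
  rcases Nat.lt_trichotomy x (2 ^ b) with hx | hx | hx
  · rcases Nat.eq_zero_or_pos x with rfl | hx0
    · -- x = 0, y = i
      rcases Nat.lt_trichotomy y (2 ^ a) with hy | hy | hy
      · have hy0 : 0 < y := by omega
        exact Dvd.dvd.mul_left (two_dvd_choose_two_pow hy0 hy) _
      · omega
      · rw [Nat.choose_eq_zero_of_lt hy]; simp
    · exact Dvd.dvd.mul_right (two_dvd_choose_two_pow hx0 hx) _
  · -- x = 2^b, y = i - 2^b
    subst hx
    have hy : y ≠ 0 := by omega
    rcases Nat.lt_trichotomy y (2 ^ a) with hy' | hy' | hy'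
    · exact Dvd.dvd.mul_left (two_dvd_choose_two_pow (by omega) hy') _
    · omega
    · rw [Nat.choose_eq_zero_of_lt hy']; simp
  · rw [Nat.choose_eq_zero_of_lt hx]; simp

lemma choose_alpha_odd {a b : ℕ} (hab : a < b) : Odd ((2 ^ b + 2 ^ a).choose (2 ^ a)) := by
  rw [Nat.add_choose_eq]
  have hmem : ((0 : ℕ), 2 ^ a) ∈ Finset.HasAntidiagonal.antidiagonal (2 ^ a) := by
    simp
  rw [← Finset.add_sum_erase _ _ hmem]
  simp only [Nat.choose_zero_right, Nat.choose_self, one_mul, mul_one]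
  have heven : 2 ∣ ∑ ij ∈ (Finset.HasAntidiagonal.antidiagonal (2 ^ a)).erase (0, 2 ^ a),
      (2 ^ b).choose ij.1 * (2 ^ a).choose ij.2 := by
    apply Finset.dvd_sum
    rintro ⟨x, y⟩ hxy
    rw [Finset.mem_erase, Finset.HasAntidiagonal.mem_antidiagonal] at hxy
    obtain ⟨hne, hsum⟩ := hxy
    have hx0 : 0 < x := by
      rcases Nat.eq_zero_or_pos x with rfl | h
      · exact absurd (by simpa using hsum) (by simpa using hne)
      · exact h
    have hxb : x < 2 ^ b := by
      have h1 : x ≤ 2 ^ a := by omega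
      have h2 : (2 : ℕ) ^ a < 2 ^ b := Nat.pow_lt_pow_right (by omega) hab
      omega
    exact Dvd.dvd.mul_right (two_dvd_choose_two_pow hx0 hxb) _
  obtain ⟨t, ht⟩ := heven
  rw [ht]
  exact ⟨t, by omega⟩

/-! ### Toggling an element -/

def tog (j : ℕ) (S : Finset ℕ) : Finset ℕ := if j ∈ S then S.erase j else insert j S

lemma tog_subset {n j : ℕ} (hj : j ∈ Finset.Ico 1 n) {S : Finset ℕ} (hS : S ⊆ Finset.Ico 1 n) :
    tog j S ⊆ Finset.Ico 1 n := by
  unfold tog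
  split
  · exact (S.erase_subset j).trans hS
  · exact Finset.insert_subset hj hS

lemma mem_tog_self {j : ℕ} {S : Finset ℕ} : j ∈ tog j S ↔ j ∉ S := by
  unfold tog
  split
  · simp_all
  · simp_all

lemma mem_tog_other {i j : ℕ} (h : i ≠ j) {S : Finset ℕ} : i ∈ tog j S ↔ i ∈ S := by
  unfold tog
  split
  · simp [Finset.mem_erase, h]
  · simp [Finset.mem_insert, h]

lemma tog_tog {j : ℕ} {S : Finset ℕ} : tog j (tog j S) = S := by
  ext x
  by_cases hx : x = j
  · subst hx
    rw [mem_tog_self, mem_tog_self]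
    simp
  · rw [mem_tog_other hx, mem_tog_other hx]

lemma tog_comm {i j : ℕ} (h : i ≠ j) {S : Finset ℕ} : tog i (tog j S) = tog j (tog i S) := by
  ext x
  by_cases hxi : x = i
  · subst hxi
    rw [mem_tog_self, mem_tog_other h, mem_tog_other h, mem_tog_self]
  · by_cases hxj : x = j
    · subst hxj
      rw [mem_tog_other (Ne.symm h), mem_tog_self, mem_tog_self, mem_tog_other (Ne.symm h)]
    · rw [mem_tog_other hxi, mem_tog_other hxj, mem_tog_other hxj, mem_tog_other hxi]

/-- The key toggling identity for the descent set statistic. -/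
lemma beta_tog {n j : ℕ} (hj1 : 1 ≤ j) (hjn : j < n) {S : Finset ℕ}
    (hS : S ⊆ Finset.Ico 1 n) :
    ∃ T₁ T₂ : Finset ℕ, T₁ ⊆ Finset.Ico 1 j ∧ T₂ ⊆ Finset.Ico 1 (n - j) ∧
      beta n (tog j S) + beta n S = n.choose j * (beta j T₁ * beta (n - j) T₂) := by
  have hsub : ∀ S' : Finset ℕ, S' ⊆ Finset.Ico 1 n → S'.filter (· < j) ⊆ Finset.Ico 1 j := by
    intro S' hS' x hx
    rw [Finset.mem_filter] at hx
    have := hS' hx.1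
    rw [Finset.mem_Ico] at this ⊢
    exact ⟨this.1, hx.2⟩
  have hsub2 : ∀ S' : Finset ℕ, S' ⊆ Finset.Ico 1 n →
      (S'.filter fun i => j < i).image (· - j) ⊆ Finset.Ico 1 (n - j) := by
    intro S' hS' x hx
    rw [Finset.mem_image] at hx
    obtain ⟨y, hy, rfl⟩ := hx
    rw [Finset.mem_filter] at hy
    have := hS' hy.1
    rw [Finset.mem_Ico] at this ⊢
    omega
  by_cases hjS : j ∈ S
  · have hkey := beta_split hj1 hjn (S.erase j) ((S.erase_subset j).trans hS)
      (S.notMem_erase j)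
    rw [Finset.insert_erase hjS] at hkey
    refine ⟨_, _, hsub _ ((S.erase_subset j).trans hS), hsub2 _ ((S.erase_subset j).trans hS), ?_⟩
    rw [tog, if_pos hjS]
    linarith [hkey]
  · have hkey := beta_split hj1 hjn S hS hjS
    refine ⟨_, _, hsub _ hS, hsub2 _ hS, ?_⟩
    rw [tog, if_neg hjS]
    linarith [hkey]

/-! ### β for powers of two is odd -/

lemma beta_two_pow_odd (c : ℕ) : ∀ S : Finset ℕ, S ⊆ Finset.Ico 1 (2 ^ c) →
    Odd (beta (2 ^ c) S) := by
  intro S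
  induction S using Finset.strongInduction with
  | _ S ih =>
    intro hS
    rcases S.eq_empty_or_nonempty with rfl | ⟨k, hk⟩
    · rw [beta_empty]; exact odd_one
    · have hkI := hS hk
      rw [Finset.mem_Ico] at hkI
      have hsplit := beta_split hkI.1 hkI.2 (S.erase k) ((S.erase_subset k).trans hS)
        (S.notMem_erase k)
      rw [Finset.insert_erase hk] at hsplit
      have heven : 2 ∣ (2 ^ c).choose k := two_dvd_choose_two_pow hkI.1 hkI.2
      have hprev : Odd (beta (2 ^ c) (S.erase k)) :=
        ih (S.erase k) (Finset.erase_ssubset hk) ((S.erase_subset k).trans hS)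
      obtain ⟨u, hu⟩ := heven.mul_right
        (beta k (Finset.filter (fun x => x < k) (S.erase k)) *
          beta (2 ^ c - k) (Finset.image (fun x => x - k) (Finset.filter (fun i => k < i) (S.erase k))))
      rw [hu] at hsplit
      rw [Nat.odd_iff] at hprev ⊢
      omega

/-! ### Cyclotomic divisibility -/

open Polynomial in
lemma cyclotomic_dvd_X_pow_add_one {s : ℕ} (hs : 0 < s) (hsodd : Odd s) :
    cyclotomic (2 * s) ℤ ∣ X ^ s + 1 := by
  have hprime : Prime (cyclotomic (2 * s) ℤ) :=
    (UniqueFactorizationMonoid.irreducible_iff_prime).mp (cyclotomic.irreducible (by omega))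
  have hdvd : cyclotomic (2 * s) ℤ ∣ ((X : ℤ[X]) ^ s - 1) * ((X : ℤ[X]) ^ s + 1) := by
    have h1 : ((X : ℤ[X]) ^ s - 1) * ((X : ℤ[X]) ^ s + 1) = (X : ℤ[X]) ^ (2 * s) - 1 := by
      rw [mul_comm 2 s, pow_mul]
      ring
    rw [h1, ← prod_cyclotomic_eq_X_pow_sub_one (by omega) ℤ]
    exact Finset.dvd_prod_of_mem _ (Nat.mem_divisors_self _ (by omega))
  rcases hprime.dvd_or_dvd hdvd with h | h
  · exfalso
    rw [← prod_cyclotomic_eq_X_pow_sub_one hs ℤ] at h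
    obtain ⟨d, hd, hdvd'⟩ := hprime.exists_mem_finset_dvd h
    rw [Nat.mem_divisors] at hd
    have hirr2 : Irreducible (cyclotomic d ℤ) :=
      cyclotomic.irreducible (Nat.pos_of_dvd_of_pos hd.1 hs)
    have heq : cyclotomic (2 * s) ℤ = cyclotomic d ℤ :=
      Polynomial.eq_of_monic_of_associated (cyclotomic.monic _ ℤ) (cyclotomic.monic _ ℤ)
        (hprime.irreducible.associated_of_dvd hirr2 hdvd')
    have : 2 * s = d := cyclotomic_injective heq
    have := Nat.le_of_dvd hs hd.1
    omega
  · exact h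



open Polynomial in
lemma pair_dvd {s u v : ℕ} (hs : 0 < s) (hsodd : Odd s) (hpar : u % 2 ≠ v % 2)
    (hmod : (s : ℤ) ∣ (v : ℤ) - (u : ℤ)) :
    cyclotomic (2 * s) ℤ ∣ (X : ℤ[X]) ^ u + (X : ℤ[X]) ^ v := by
  wlog huv : u ≤ v generalizing u v
  · have h := this (fun hh => hpar hh.symm) (by
      have : (s : ℤ) ∣ -((v : ℤ) - (u : ℤ)) := dvd_neg.mpr hmod
      simpa [neg_sub] using this) (by omega)
    rw [add_comm] at h
    exact h
  set d := v - u with hd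
  have hvd : v = u + d := by omega
  have hsd : s ∣ d := by
    have : ((d : ℕ) : ℤ) = (v : ℤ) - (u : ℤ) := by omega
    rw [← Int.natCast_dvd_natCast]
    rw [this]
    exact hmod
  have hdodd : Odd d := by
    rw [Nat.odd_iff]
    omega
  obtain ⟨m, hm⟩ := hsd
  have hmodd : Odd m := by
    rw [hm] at hdodd
    exact (Nat.odd_mul.mp hdodd).2
  have h1 : cyclotomic (2 * s) ℤ ∣ (X : ℤ[X]) ^ s + 1 := cyclotomic_dvd_X_pow_add_one hs hsodd
  have h2 : ((X : ℤ[X]) ^ s + 1) ∣ ((X : ℤ[X]) ^ s) ^ m + 1 ^ m :=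
    Odd.add_dvd_pow_add_pow _ _ hmodd
  have h3 : (X : ℤ[X]) ^ u + (X : ℤ[X]) ^ v = (X : ℤ[X]) ^ u * (((X : ℤ[X]) ^ s) ^ m + 1 ^ m) := by
    rw [hvd, hm, one_pow, ← pow_mul, pow_add]
    ring
  rw [h3]
  exact Dvd.dvd.mul_left (h1.trans h2) _

/-- For `n = 2^b + 2^a` with `b > a ≥ 0` and `s` an odd positive integer dividing
`C(n, 2^a)` as well as `C(n, k)` for some `1 ≤ k ≤ n-1` with `k ∉ {2^a, 2^b}`,
the cyclotomic polynomial `Φ_{2s}` divides the descent set polynomial `Q_n(t)`. -/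
theorem cyclotomic_two_s_dvd (a b s k : ℕ) (hab : a < b) (hs : 0 < s) (hsodd : Odd s)
    (hsa : s ∣ (2 ^ b + 2 ^ a).choose (2 ^ a))
    (hk1 : 1 ≤ k) (hk2 : k ≤ 2 ^ b + 2 ^ a - 1)
    (hka : k ≠ 2 ^ a) (hkb : k ≠ 2 ^ b)
    (hk : s ∣ (2 ^ b + 2 ^ a).choose k) :
    Polynomial.cyclotomic (2 * s) ℤ ∣ Q (2 ^ b + 2 ^ a) := by
  classical
  set n := 2 ^ b + 2 ^ a with hn
  have h2a : 1 ≤ 2 ^ a := Nat.one_le_two_pow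
  have h2b : 1 ≤ 2 ^ b := Nat.one_le_two_pow
  have h2ab : 2 ^ a < 2 ^ b := Nat.pow_lt_pow_right one_lt_two hab
  have hα1 : 1 ≤ 2 ^ a := h2a
  have hαn : 2 ^ a < n := by omega
  have hkn : k < n := by omega
  have hαk : (2 : ℕ) ^ a ≠ k := Ne.symm hka
  -- the key pair divisibility
  have key : ∀ S ∈ (Finset.Ico 1 n).powerset,
      Polynomial.cyclotomic (2 * s) ℤ ∣
        (Polynomial.X : Polynomial ℤ) ^ beta n S + (Polynomial.X : Polynomial ℤ) ^ beta n (tog (2 ^ a) (tog k S)) := by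
    intro S hSmem
    rw [Finset.mem_powerset] at hSmem
    obtain ⟨T₁, T₂, hT₁, hT₂, he1⟩ := beta_tog hk1 hkn hSmem
    have hmemk : k ∈ Finset.Ico 1 n := Finset.mem_Ico.mpr ⟨hk1, hkn⟩
    have hsub' : tog k S ⊆ Finset.Ico 1 n := tog_subset hmemk hSmem
    obtain ⟨U₁, U₂, hU₁, hU₂, he2⟩ := beta_tog hα1 hαn hsub'
    have hnα : n - 2 ^ a = 2 ^ b := by omega
    rw [hnα] at hU₂ he2
    have hCkEven : 2 ∣ n.choose k := choose_big_even hab (by omega) (by omega) hka hkb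
    have hCαOdd : Odd (n.choose (2 ^ a)) := choose_alpha_odd hab
    have hU₁odd : Odd (beta (2 ^ a) U₁) := beta_two_pow_odd a U₁ hU₁
    have hU₂odd : Odd (beta (2 ^ b) U₂) := beta_two_pow_odd b U₂ hU₂
    have hwu_even : 2 ∣ beta n (tog k S) + beta n S := by
      rw [he1]
      exact hCkEven.mul_right _
    have hvw_odd : Odd (beta n (tog (2 ^ a) (tog k S)) + beta n (tog k S)) := by
      rw [he2]
      exact hCαOdd.mul (hU₁odd.mul hU₂odd)
    have hpar : beta n S % 2 ≠ beta n (tog (2 ^ a) (tog k S)) % 2 := by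
      rw [Nat.odd_iff] at hvw_odd
      omega
    have hd1 : s ∣ beta n (tog k S) + beta n S := by
      rw [he1]; exact hk.mul_right _
    have hd2 : s ∣ beta n (tog (2 ^ a) (tog k S)) + beta n (tog k S) := by
      rw [he2]; exact hsa.mul_right _
    have hmods : (s : ℤ) ∣ (beta n (tog (2 ^ a) (tog k S)) : ℤ) - (beta n S : ℤ) := by
      have d1 : (s : ℤ) ∣ ((beta n (tog k S) : ℤ) + (beta n S : ℤ)) := by
        exact_mod_cast Int.natCast_dvd_natCast.mpr hd1
      have d2 : (s : ℤ) ∣ ((beta n (tog (2 ^ a) (tog k S)) : ℤ) + (beta n (tog k S) : ℤ)) := by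
        exact_mod_cast Int.natCast_dvd_natCast.mpr hd2
      have heq : (beta n (tog (2 ^ a) (tog k S)) : ℤ) - (beta n S : ℤ)
          = ((beta n (tog (2 ^ a) (tog k S)) : ℤ) + (beta n (tog k S) : ℤ))
            - ((beta n (tog k S) : ℤ) + (beta n S : ℤ)) := by ring
      rw [heq]
      exact dvd_sub d2 d1
    exact pair_dvd hs hsodd hpar hmods
  have hmem : Q n ∈ Ideal.span {Polynomial.cyclotomic (2 * s) ℤ} := by
    rw [← Ideal.Quotient.eq_zero_iff_mem, Q, map_sum]
    refine Finset.sum_involution (fun S _ => tog (2 ^ a) (tog k S)) ?_ ?_ ?_ ?_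
    · intro S hSm
      rw [← map_add, Ideal.Quotient.eq_zero_iff_mem, Ideal.mem_span_singleton]
      exact key S hSm
    · intro S hSm _
      intro heq
      have h1 : (2 ^ a) ∈ tog (2 ^ a) (tog k S) ↔ (2 ^ a) ∉ tog k S := mem_tog_self
      have h2 : (2 ^ a) ∈ tog k S ↔ (2 ^ a) ∈ S := mem_tog_other hαk
      have heq' : tog (2 ^ a) (tog k S) = S := heq
      rw [heq'] at h1
      tauto
    · intro S hSm
      rw [Finset.mem_powerset] at hSm ⊢
      exact tog_subset (Finset.mem_Ico.mpr ⟨hα1, hαn⟩) (tog_subset (Finset.mem_Ico.mpr ⟨hk1, hkn⟩) hSm)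
    · intro S hSm
      show tog (2 ^ a) (tog k (tog (2 ^ a) (tog k S))) = S
      rw [tog_comm hka, tog_tog, tog_tog]
  exact (Ideal.mem_span_singleton).mp hmem
end
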